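/- arXiv:1709.02977 — 5 statements merged into one kernel-verified Lean document; each statement's English description precedes it below -/
import Mathlib

section
/- Let c > 0 and Δ > 0 be real numbers. The equation y·(y−Δ)·log(y/(y−Δ)) = cΔ/3 has exactly one solution y in the interval (Δ, Δ + c/3]. (This solution is the optimal maximum-likelihood decision threshold θ for binary timing modulation over the diffusion-based molecular timing channel with a single released particle.) -/
open Real Set Filter Topology

private lemma log_gap (Δ y : ℝ) (hΔ : 0 < Δ) (hy : Δ < y) :
    Δ / y < Real.log y - Real.log (y - Δ) := by
  have hy0 : (0:ℝ) < y := hΔ.trans hy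
  have hyΔ : (0:ℝ) < y - Δ := sub_pos.mpr hy
  have h1 : Real.log ((y - Δ) / y) < (y - Δ) / y - 1 := by
    apply Real.log_lt_sub_one_of_pos (by positivity)
    have : y - Δ ≠ y := by linarith
    exact fun h => this (by field_simp at h; linarith)
  rw [Real.log_div hyΔ.ne' hy0.ne'] at h1
  have : (y - Δ) / y - 1 = -(Δ / y) := by field_simp; ring
  linarith [h1, this ▸ h1]

/-- The maximum-likelihood threshold equation for the single-particle DBMT channel
has exactly one solution in the interval `(Δ, Δ + c/3]`. -/
theorem unique_ML_threshold (c Δ : ℝ) (hc : 0 < c) (hΔ : 0 < Δ) :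
    ∃! y : ℝ, y ∈ Set.Ioc Δ (Δ + c / 3) ∧
      y * (y - Δ) * Real.log (y / (y - Δ)) = c * Δ / 3 := by
  set F : ℝ → ℝ := fun y => y * (y - Δ) * (Real.log y - Real.log (y - Δ)) with hFdef
  have hEq : ∀ y ∈ Ioi Δ, y * (y - Δ) * Real.log (y / (y - Δ)) = F y := by
    intro y hy
    have hy0 : (0:ℝ) < y := hΔ.trans hy
    have hyΔ : (0:ℝ) < y - Δ := sub_pos.mpr hy
    rw [Real.log_div hy0.ne' hyΔ.ne']
  -- derivative of F
  have hderiv : ∀ y ∈ Ioi Δ,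
      HasDerivAt F ((2*y - Δ) * (Real.log y - Real.log (y - Δ)) - Δ) y := by
    intro y hy
    have hy0 : (0:ℝ) < y := hΔ.trans hy
    have hyΔ : (0:ℝ) < y - Δ := sub_pos.mpr hy
    have h1 : HasDerivAt (fun y : ℝ => y * (y - Δ)) (1 * (y - Δ) + y * 1) y :=
      (hasDerivAt_id y).mul ((hasDerivAt_id y).sub_const Δ)
    have h2 : HasDerivAt (fun y : ℝ => Real.log y - Real.log (y - Δ))
        (y⁻¹ - (y-Δ)⁻¹ * 1) y := by
      have := (Real.hasDerivAt_log hy0.ne').sub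
        (((Real.hasDerivAt_log hyΔ.ne').comp y ((hasDerivAt_id y).sub_const Δ)))
      exact this
    have h3 := h1.mul h2
    refine h3.congr_deriv ?_
    field_simp
    ring
  -- strict monotonicity on Ioi Δ
  have hmono : StrictMonoOn F (Ioi Δ) := by
    apply strictMonoOn_of_deriv_pos (convex_Ioi Δ)
    · exact fun x hx => ((hderiv x hx).continuousAt).continuousWithinAt
    · intro x hx
      rw [interior_Ioi] at hx
      rw [(hderiv x hx).deriv]
      have hx0 : (0:ℝ) < x := hΔ.trans hx
      have hxΔ : (0:ℝ) < x - Δ := sub_pos.mpr hx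
      have h2x : 0 < 2*x - Δ := by linarith
      have hlog := log_gap Δ x hΔ hx
      have : (2*x - Δ) * (Δ / x) < (2*x - Δ) * (Real.log x - Real.log (x - Δ)) :=
        (mul_lt_mul_iff_right₀ h2x).mpr hlog
      have hkey : Δ < (2*x - Δ) * (Δ / x) := by
        rw [← mul_div_assoc, lt_div_iff₀ hx0]
        nlinarith
      linarith
  set b : ℝ := Δ + c / 3 with hb
  have hΔb : Δ < b := by simp [hb]; linarith
  -- value at right endpoint
  have hFb : c * Δ / 3 < F b := by
    have hbΔ : b - Δ = c / 3 := by ring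
    have hlog := log_gap Δ b hΔ hΔb
    have hb0 : (0:ℝ) < b := hΔ.trans hΔb
    have h2 : b * (c/3) * (Δ / b) < b * (c/3) * (Real.log b - Real.log (b - Δ)) := by
      apply (mul_lt_mul_iff_right₀ (by positivity)).mpr hlog
    have h1 : b * (c/3) * (Δ / b) = c * Δ / 3 := by field_simp
    have h3 : F b = b * (c/3) * (Real.log b - Real.log (b - Δ)) := by
      simp only [hFdef]
      rw [hbΔ]
    linarith
  -- F tends to 0 at Δ⁺
  have htend : Tendsto F (𝓝[>] Δ) (𝓝 0) := by
    have hsub : Tendsto (fun y : ℝ => y - Δ) (𝓝[>] Δ) (𝓝[>] 0) := by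
      apply tendsto_nhdsWithin_of_tendsto_nhds_of_eventually_within
      · exact (continuous_id.sub continuous_const).tendsto' Δ 0 (by simp) |>.mono_left
          nhdsWithin_le_nhds
      · filter_upwards [self_mem_nhdsWithin] with y hy
        simp [sub_pos.mpr (mem_Ioi.mp hy)]
    have h2 : Tendsto (fun y : ℝ => Real.log (y - Δ) * (y - Δ)) (𝓝[>] Δ) (𝓝 0) := by
      have := (tendsto_log_mul_rpow_nhdsGT_zero (r := 1) one_pos).comp hsub
      simpa [Function.comp_def] using this
    have hy : Tendsto (fun y : ℝ => y) (𝓝[>] Δ) (𝓝 Δ) := tendsto_id.mono_left nhdsWithin_le_nhds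
    have h1 : Tendsto (fun y : ℝ => y * ((y - Δ) * Real.log y)) (𝓝[>] Δ) (𝓝 0) := by
      have : Tendsto (fun y : ℝ => y * ((y - Δ) * Real.log y)) (𝓝[>] Δ)
          (𝓝 (Δ * ((Δ - Δ) * Real.log Δ))) := by
        apply Tendsto.mul hy
        apply Tendsto.mul ((tendsto_id.sub_const Δ).mono_left nhdsWithin_le_nhds)
        exact ((Real.continuousAt_log hΔ.ne').tendsto).comp hy
      simpa using this
    have h3 : Tendsto (fun y : ℝ => y * (Real.log (y - Δ) * (y - Δ))) (𝓝[>] Δ) (𝓝 (Δ * 0)) :=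
      Tendsto.mul hy h2
    have := h1.sub h3
    rw [mul_zero, sub_zero] at this
    apply this.congr
    intro y
    rw [hFdef]
    ring
  -- pick y₀ with F y₀ < cΔ/3
  have hev : ∀ᶠ y in 𝓝[>] Δ, F y < c * Δ / 3 := by
    have := htend.eventually_lt_const (show (0:ℝ) < c * Δ / 3 by positivity)
    exact this
  have hmem : Ioo Δ b ∈ 𝓝[>] Δ := Ioo_mem_nhdsGT_of_mem ⟨le_refl Δ, hΔb⟩
  obtain ⟨y₀, hy₀F, hy₀mem⟩ := (hev.and (eventually_of_mem hmem fun y h => h)).exists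
  have hy₀Δ : Δ < y₀ := hy₀mem.1
  have hy₀b : y₀ ≤ b := le_of_lt hy₀mem.2
  have hsubIoi : Icc y₀ b ⊆ Ioi Δ := fun x hx => lt_of_lt_of_le hy₀Δ hx.1
  -- IVT
  have hcont : ContinuousOn F (Icc y₀ b) :=
    fun x hx => ((hderiv x (hsubIoi hx)).continuousAt).continuousWithinAt
  have hIVT := intermediate_value_Icc hy₀b hcont
  have : c * Δ / 3 ∈ Icc (F y₀) (F b) := ⟨le_of_lt hy₀F, le_of_lt hFb⟩
  obtain ⟨y, hyIcc, hyF⟩ := hIVT this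
  have hyIoc : y ∈ Ioc Δ b := ⟨lt_of_lt_of_le hy₀Δ hyIcc.1, hyIcc.2⟩
  refine ⟨y, ⟨hyIoc, ?_⟩, ?_⟩
  · rw [hEq y hyIoc.1]; exact hyF
  · rintro z ⟨hzIoc, hzF⟩
    have hz : F z = c * Δ / 3 := by rw [← hEq z hzIoc.1]; exact hzF
    exact hmono.injOn hzIoc.1 hyIoc.1 (by rw [hz, hyF])
end

section
/- Let c > 0. For every z > 0, the integral of the Lévy density over (0, z] equals erfc evaluated at √(c/(2z)); that is, ∫_{(0,z]} √(c/(2π u³))·exp(−c/(2u)) du = (2/√π)·∫_{√(c/(2z))}^∞ exp(−u²) du. (Hence the CDF of the Lévy distribution with location 0 and scale c is F(z) = erfc(√(c/(2z))) for z > 0.) -/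
open MeasureTheory

/-- The Lévy density with location 0 and scale `c`. -/
noncomputable def levyDensity (c z : ℝ) : ℝ :=
  if 0 < z then Real.sqrt (c / (2 * Real.pi * z ^ 3)) * Real.exp (-c / (2 * z)) else 0

/-- The complementary error function `erfc x = (2/√π) ∫_x^∞ exp(−u²) du`. -/
noncomputable def erfc (x : ℝ) : ℝ :=
  (2 / Real.sqrt Real.pi) * ∫ u in Set.Ioi x, Real.exp (-u ^ 2)

/-- The CDF of the Lévy distribution with location 0 and scale `c` is
`F(z) = erfc (√(c/(2z)))` for `z > 0`. -/
theorem levy_cdf (c : ℝ) (hc : 0 < c) (z : ℝ) (hz : 0 < z) :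
    ∫ u in Set.Ioc (0 : ℝ) z, levyDensity c u = erfc (Real.sqrt (c / (2 * z))) := by
  set a := Real.sqrt (c / (2 * z)) with ha_def
  have hcz : 0 < c / (2 * z) := div_pos hc (by linarith)
  have ha : 0 < a := Real.sqrt_pos.mpr hcz
  have ha2 : a ^ 2 = c / (2 * z) := Real.sq_sqrt hcz.le
  set f : ℝ → ℝ := fun t => c / (2 * t ^ 2) with hf_def
  set f' : ℝ → ℝ := fun t => -(c / t ^ 3) with hf'_def
  have himg : f '' Set.Ioi a = Set.Ioo 0 z := by
    ext u
    constructor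
    · rintro ⟨t, ht, rfl⟩
      have ht0 : 0 < t := lt_trans ha ht
      constructor
      · exact div_pos hc (by positivity)
      · have hta : a < t := ht
        have h2 : c / (2 * z) < t ^ 2 := by
          calc c / (2 * z) = a ^ 2 := ha2.symm
          _ < t ^ 2 := by nlinarith
        rw [div_lt_iff₀ (by positivity)] at h2
        rw [hf_def]
        simp only
        rw [div_lt_iff₀ (by positivity)]
        nlinarith
    · rintro ⟨hu0, huz⟩
      refine ⟨Real.sqrt (c / (2 * u)), ?_, ?_⟩
      · have : c / (2 * z) < c / (2 * u) := by
          apply div_lt_div_of_pos_left hc (by linarith) (by linarith)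
        exact Real.sqrt_lt_sqrt hcz.le this
      · have hcu : 0 < c / (2 * u) := div_pos hc (by linarith)
        have hsq : Real.sqrt (c / (2 * u)) ^ 2 = c / (2 * u) := Real.sq_sqrt hcu.le
        rw [hf_def]
        simp only
        rw [hsq]
        field_simp
  have hmeas : MeasurableSet (Set.Ioi a) := measurableSet_Ioi
  have hderiv : ∀ t ∈ Set.Ioi a, HasDerivWithinAt f (f' t) (Set.Ioi a) t := by
    intro t ht
    have ht0 : 0 < t := lt_trans ha ht
    have h1 : HasDerivAt (fun t : ℝ => t ^ 2) (2 * t) t := by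
      simpa using hasDerivAt_pow 2 t
    have h2 : HasDerivAt (fun t : ℝ => 2 * t ^ 2) (2 * (2 * t)) t := h1.const_mul 2
    have h3 : HasDerivAt (fun t : ℝ => c * (2 * t ^ 2)⁻¹)
        (c * (-(2 * (2 * t)) / (2 * t ^ 2) ^ 2)) t := (h2.inv (by positivity)).const_mul c
    have hfe : f = fun t : ℝ => c * (2 * t ^ 2)⁻¹ := by
      ext x; rw [hf_def]; ring
    have heq : c * (-(2 * (2 * t)) / (2 * t ^ 2) ^ 2) = f' t := by
      rw [hf'_def]; field_simp
    rw [← hfe, heq] at h3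
    exact h3.hasDerivWithinAt
  have hinj : Set.InjOn f (Set.Ioi a) := by
    intro s hs t ht hst
    have hs0 : 0 < s := lt_trans ha hs
    have ht0 : 0 < t := lt_trans ha ht
    rw [hf_def] at hst
    simp only at hst
    field_simp at hst
    nlinarith [hst, mul_pos hs0 ht0, hc]
  have key : ∫ u in Set.Ioc (0 : ℝ) z, levyDensity c u
      = ∫ t in Set.Ioi a, |f' t| • levyDensity c (f t) := by
    rw [MeasureTheory.integral_Ioc_eq_integral_Ioo, ← himg]
    exact integral_image_eq_integral_abs_deriv_smul hmeas hderiv hinj _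
  rw [key]
  have hcong : ∀ t ∈ Set.Ioi a, |f' t| • levyDensity c (f t)
      = (2 / Real.sqrt Real.pi) * Real.exp (-t ^ 2) := by
    intro t ht
    have ht0 : 0 < t := lt_trans ha ht
    have hft : 0 < f t := div_pos hc (by positivity)
    have hsp : 0 < Real.sqrt Real.pi := Real.sqrt_pos.mpr Real.pi_pos
    rw [levyDensity, if_pos hft, hf_def, hf'_def]
    simp only [smul_eq_mul]
    have harg : c / (2 * Real.pi * (c / (2 * t ^ 2)) ^ 3)
        = (2 * t ^ 3 / (Real.sqrt Real.pi * c)) ^ 2 := by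
      have hpi : Real.sqrt Real.pi ^ 2 = Real.pi := Real.sq_sqrt Real.pi_pos.le
      field_simp
      linear_combination hpi
    rw [harg, Real.sqrt_sq (by positivity)]
    have hexp : -c / (2 * (c / (2 * t ^ 2))) = -t ^ 2 := by field_simp
    rw [hexp, abs_neg, abs_of_pos (by positivity : (0:ℝ) < c / t ^ 3)]
    field_simp
  rw [setIntegral_congr_fun hmeas hcong, MeasureTheory.integral_const_mul]
  rfl
end

section
/- Let c > 0. For every real t, the characteristic function of the Lévy distribution with location 0 and scale c satisfies ∫_{(0,∞)} exp(i t z)·√(c/(2π z³))·exp(−c/(2z)) dz = exp(−√(c·|t|)·(1 − i·sgn(t))), where sgn(t) is 1 for t > 0, 0 for t = 0, and −1 for t < 0. (This identifies the Lévy distribution as the stable distribution S(0, c, 1/2, 1).) -/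
open MeasureTheory

open Set Real Filter Topology

section Glasser
variable {b u : ℝ}

private lemma gl_deriv (hu : (0:ℝ) < u) : HasDerivAt (fun u : ℝ => u - b/u) (1 + b/u^2) u := by
  have h : HasDerivAt (fun u : ℝ => u - b/u) (1 - (b * (-(u ^ 2)⁻¹))) u :=
    (hasDerivAt_id u).sub ((hasDerivAt_inv (ne_of_gt hu)).const_mul b)
  convert h using 1
  field_simp
  ring

private lemma gl_img (hb : 0 < b) : (fun u => u - b/u) '' Ioi 0 = univ := by
  apply eq_univ_of_forall
  intro v
  have h4 : (0:ℝ) < v^2 + 4*b := by positivity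
  set s := Real.sqrt (v^2 + 4*b) with hs
  have hs2 : s^2 = v^2 + 4*b := Real.sq_sqrt h4.le
  have hsv : |v| < s := by
    nlinarith [abs_nonneg v, Real.sqrt_nonneg (v^2+4*b), sq_abs v]
  have hu : 0 < (v + s)/2 := by
    have := neg_abs_le v
    linarith
  refine ⟨(v+s)/2, hu, ?_⟩
  have hne : (v+s)/2 ≠ 0 := ne_of_gt hu
  rw [sub_eq_iff_eq_add', ← sub_eq_iff_eq_add, eq_comm, div_eq_iff hne]
  nlinarith

private lemma gl_inj (hb : 0 < b) : InjOn (fun u : ℝ => u - b/u) (Ioi 0) := by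
  have : StrictMonoOn (fun u : ℝ => u - b/u) (Ioi 0) := by
    intro x hx y hy hxy
    have hx0 : (0:ℝ) < x := hx
    have : b/y < b/x := div_lt_div_of_pos_left hb hx0 hxy
    simp only
    linarith
  exact this.injOn

private lemma psi_deriv (hu : (0:ℝ) < u) :
    HasDerivAt (fun u : ℝ => b/u) (-(b/u^2)) u := by
  have h : HasDerivAt (fun u : ℝ => b/u) (b * (-(u ^ 2)⁻¹)) u := by
    simpa [div_eq_mul_inv] using (hasDerivAt_inv (ne_of_gt hu)).const_mul b
  convert h using 1
  field_simp

private lemma psi_img (hb : 0 < b) : (fun u : ℝ => b/u) '' Ioi 0 = Ioi 0 := by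
  apply Subset.antisymm
  · rintro x ⟨u, hu, rfl⟩; exact div_pos hb hu
  · rintro x (hx : 0 < x)
    exact ⟨b/x, div_pos hb hx, by field_simp⟩

private lemma psi_inj (hb : 0 < b) : InjOn (fun u : ℝ => b/u) (Ioi 0) := by
  have : StrictAntiOn (fun u : ℝ => b/u) (Ioi 0) :=
    fun x hx y hy hxy => div_lt_div_of_pos_left hb hx hxy
  exact this.injOn

private lemma gauss_integrable : IntegrableOn (fun v : ℝ => Real.exp (-v^2)) univ := by
  rw [integrableOn_univ]
  simpa using integrable_exp_neg_mul_sq (one_pos (α := ℝ))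

private lemma gauss_int : ∫ v : ℝ, Real.exp (-v^2) = Real.sqrt π := by
  have := integral_gaussian 1
  simpa using this

private lemma J_eq (hb : 0 < b) :
    ∫ u in Ioi (0:ℝ), Real.exp (-(u - b/u)^2) = Real.sqrt π / 2 := by
  set h : ℝ → ℝ := fun u => Real.exp (-(u - b/u)^2) with hh
  have hderiv : ∀ u ∈ Ioi (0:ℝ), HasDerivWithinAt (fun u : ℝ => u - b/u) (1 + b/u^2) (Ioi 0) u :=
    fun u hu => (gl_deriv hu).hasDerivWithinAt
  have habs : ∀ u ∈ Ioi (0:ℝ), |1 + b/u^2| • Real.exp (-(u - b/u)^2) = (1 + b/u^2) * h u := by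
    intro u hu
    have hu0 : (0:ℝ) < u := hu
    rw [smul_eq_mul, abs_of_pos (by positivity)]
  have himg := integral_image_eq_integral_abs_deriv_smul measurableSet_Ioi hderiv (gl_inj hb)
      (fun v => Real.exp (-v^2))
  rw [gl_img hb] at himg
  have key : ∫ u in Ioi (0:ℝ), (1 + b/u^2) * h u = Real.sqrt π := by
    rw [← setIntegral_congr_fun measurableSet_Ioi habs, ← himg, setIntegral_univ, gauss_int]
  -- integrability of big integrand
  have hbig : IntegrableOn (fun u => (1 + b/u^2) * h u) (Ioi 0) := by
    have := (integrableOn_image_iff_integrableOn_abs_deriv_smul measurableSet_Ioi hderiv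
      (gl_inj hb) (fun v => Real.exp (-v^2))).mp (by rw [gl_img hb]; exact gauss_integrable)
    exact this.congr_fun habs measurableSet_Ioi
  -- h is integrable
  have h_cont : ContinuousOn h (Ioi 0) := by
    apply ContinuousOn.rexp
    apply ContinuousOn.neg
    apply ContinuousOn.pow
    exact continuousOn_id.sub (continuousOn_const.div continuousOn_id (fun x hx => ne_of_gt hx))
  have h_int : IntegrableOn h (Ioi 0) := by
    apply hbig.mono' (h_cont.aestronglyMeasurable measurableSet_Ioi)
    filter_upwards [ae_restrict_mem measurableSet_Ioi] with u hu
    have hu0 : (0:ℝ) < u := hu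
    rw [Real.norm_eq_abs, abs_of_pos (Real.exp_pos _)]
    nlinarith [Real.exp_pos (-(u - b/u)^2), div_pos hb (pow_pos hu0 2),
      (Real.exp_pos (-(u - b/u)^2)).le, mul_pos (div_pos hb (pow_pos hu0 2)) (Real.exp_pos (-(u - b/u)^2))]
  -- substitution u ↦ b/u shows ∫ (b/u²) h = ∫ h
  have hpsideriv : ∀ u ∈ Ioi (0:ℝ), HasDerivWithinAt (fun u : ℝ => b/u) (-(b/u^2)) (Ioi 0) u :=
    fun u hu => (psi_deriv hu).hasDerivWithinAt
  have hsub := integral_image_eq_integral_abs_deriv_smul measurableSet_Ioi hpsideriv (psi_inj hb) h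
  rw [psi_img hb] at hsub
  have hsub' : ∫ u in Ioi (0:ℝ), h u = ∫ u in Ioi (0:ℝ), (b/u^2) * h u := by
    rw [hsub]
    apply setIntegral_congr_fun measurableSet_Ioi
    intro u hu
    have hu0 : (0:ℝ) < u := hu
    have hbu : b/(b/u) = u := by field_simp
    have hhu : h (b/u) = h u := by
      rw [hh]
      simp only [hbu]
      congr 1
      ring
    simp only [abs_neg, smul_eq_mul, hhu, abs_of_pos (show (0:ℝ) < b/u^2 by positivity)]
  -- integrability of (b/u^2) * h u
  have hint2 : IntegrableOn (fun u => (b/u^2) * h u) (Ioi 0) := by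
    apply (hbig.sub h_int).congr
    filter_upwards with u
    simp only [Pi.sub_apply, hh]
    ring
  have hsplit : ∫ u in Ioi (0:ℝ), (1 + b/u^2) * h u
      = (∫ u in Ioi (0:ℝ), h u) + ∫ u in Ioi (0:ℝ), (b/u^2) * h u := by
    have hfun : (fun u : ℝ => (1 + b/u^2) * h u) = fun u => h u + (b/u^2) * h u := by
      funext u; ring
    rw [hfun, integral_add h_int hint2]
  rw [hsplit, ← hsub'] at key
  linarith

end Glasser

private lemma glasser_integrable (b : ℝ) :
    IntegrableOn (fun u : ℝ => Real.exp (-(u^2 + b^2/u^2))) (Ioi 0) := by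
  have hg : IntegrableOn (fun u : ℝ => Real.exp (-u^2)) (Ioi 0) := by
    have : Integrable (fun u : ℝ => Real.exp (-u^2)) := by
      simpa using integrable_exp_neg_mul_sq (one_pos (α := ℝ))
    exact this.integrableOn
  apply hg.mono' ?_ ?_
  · apply ContinuousOn.aestronglyMeasurable ?_ measurableSet_Ioi
    apply ContinuousOn.rexp
    apply ContinuousOn.neg
    apply ContinuousOn.add (continuous_pow 2).continuousOn
    exact (continuousOn_const.div (continuous_pow 2).continuousOn (fun x hx => by
      have : (0:ℝ) < x := hx
      positivity))
  · filter_upwards [ae_restrict_mem measurableSet_Ioi] with u hu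
    have hu0 : (0:ℝ) < u := hu
    rw [Real.norm_eq_abs, abs_of_pos (Real.exp_pos _)]
    apply Real.exp_le_exp.mpr
    have : 0 ≤ b^2/u^2 := by positivity
    linarith

private lemma glasser (hb : 0 ≤ b) :
    ∫ u in Ioi (0:ℝ), Real.exp (-(u^2 + b^2/u^2)) = Real.sqrt π / 2 * Real.exp (-(2*b)) := by
  rcases eq_or_lt_of_le hb with rfl | hb
  · simp only [ne_eq, OfNat.ofNat_ne_zero, not_false_eq_true, zero_pow, zero_div, add_zero,
      mul_zero, neg_zero, Real.exp_zero, mul_one]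
    have := integral_gaussian_Ioi 1
    simpa using this
  · have hcong : ∀ u ∈ Ioi (0:ℝ),
        Real.exp (-(u^2 + b^2/u^2)) = Real.exp (-(2*b)) * Real.exp (-(u - b/u)^2) := by
      intro u hu
      have hu0 : (0:ℝ) < u := hu
      rw [← Real.exp_add]
      congr 1
      field_simp
      ring
    rw [setIntegral_congr_fun measurableSet_Ioi hcong, MeasureTheory.integral_const_mul, J_eq hb]
    ring


section Laplace
variable {c l u : ℝ}

private lemma phi_deriv (hc : 0 < c) (hu : (0:ℝ) < u) :
    HasDerivAt (fun u : ℝ => c/(2*u^2)) (-(c/u^3)) u := by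
  have h2 : HasDerivAt (fun u : ℝ => u^2) (2*u) u := by
    simpa using hasDerivAt_pow 2 u
  have h := (h2.inv (by positivity)).const_mul (c/2)
  have hf : (fun y => c / 2 * (fun u : ℝ => u ^ 2)⁻¹ y) = (fun u : ℝ => c/(2*u^2)) := by
    funext x; simp only [Pi.inv_apply]; ring
  rw [hf] at h
  refine h.congr_deriv ?_
  field_simp

private lemma phi_img (hc : 0 < c) : (fun u : ℝ => c/(2*u^2)) '' Ioi 0 = Ioi 0 := by
  apply Subset.antisymm
  · rintro z ⟨u, hu, rfl⟩
    have hu0 : (0:ℝ) < u := hu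
    exact div_pos hc (by positivity)
  · rintro z (hz : 0 < z)
    refine ⟨Real.sqrt (c/(2*z)), Real.sqrt_pos.mpr (by positivity), ?_⟩
    have h1 : Real.sqrt (c/(2*z)) ^ 2 = c/(2*z) := Real.sq_sqrt (by positivity)
    simp only [h1]
    field_simp

private lemma phi_inj (hc : 0 < c) : InjOn (fun u : ℝ => c/(2*u^2)) (Ioi 0) := by
  have : StrictAntiOn (fun u : ℝ => c/(2*u^2)) (Ioi 0) := by
    intro x hx y hy hxy
    have hx0 : (0:ℝ) < x := hx
    apply div_lt_div_of_pos_left hc (by positivity)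
    have : x^2 < y^2 := by nlinarith
    linarith
  exact this.injOn

/-- transformed integrand computation -/
private lemma levy_transform (hc : 0 < c) (hl : 0 ≤ l) (hu : (0:ℝ) < u) :
    (c/u^3) * (levyDensity c (c/(2*u^2)) * Real.exp (-(l * (c/(2*u^2)))))
      = 2 / Real.sqrt π * Real.exp (-(u^2 + (Real.sqrt (l*c/2))^2/u^2)) := by
  have hz : (0:ℝ) < c/(2*u^2) := div_pos hc (by positivity)
  have hπs : (0:ℝ) < Real.sqrt π := Real.sqrt_pos.mpr pi_pos
  rw [levyDensity, if_pos hz]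
  have h1 : c / (2 * π * (c/(2*u^2)) ^ 3) = (2*u^3/(Real.sqrt π * c))^2 := by
    have hπ : Real.sqrt π ^ 2 = π := Real.sq_sqrt pi_pos.le
    field_simp
    linear_combination hπ
  rw [h1, Real.sqrt_sq (by positivity)]
  have h2 : -c / (2 * (c/(2*u^2))) = -u^2 := by field_simp
  have h3 : -(l * (c/(2*u^2))) = -((Real.sqrt (l*c/2))^2/u^2) := by
    rw [Real.sq_sqrt (by positivity)]
    field_simp
  rw [h2, h3,
    show -(u^2 + (Real.sqrt (l*c/2))^2/u^2) = -u^2 + -((Real.sqrt (l*c/2))^2/u^2) by ring,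
    Real.exp_add]
  field_simp

private lemma levy_deriv_within (hc : 0 < c) :
    ∀ u ∈ Ioi (0:ℝ), HasDerivWithinAt (fun u : ℝ => c/(2*u^2)) (-(c/u^3)) (Ioi 0) u :=
  fun u hu => (phi_deriv hc hu).hasDerivWithinAt

private lemma levy_laplace_integrable (hc : 0 < c) (hl : 0 ≤ l) :
    IntegrableOn (fun z => levyDensity c z * Real.exp (-(l*z))) (Ioi 0) := by
  rw [← phi_img hc,
    integrableOn_image_iff_integrableOn_abs_deriv_smul measurableSet_Ioi (levy_deriv_within hc)
      (phi_inj hc)]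
  apply (((glasser_integrable (Real.sqrt (l*c/2))).const_mul (2/Real.sqrt π))).congr
  filter_upwards [ae_restrict_mem measurableSet_Ioi] with u hu
  have hu0 : (0:ℝ) < u := hu
  rw [smul_eq_mul, abs_neg, abs_of_pos (by positivity : (0:ℝ) < c/u^3)]
  exact (levy_transform hc hl hu0).symm

private lemma levy_laplace_real (hc : 0 < c) (hl : 0 ≤ l) :
    ∫ z in Ioi (0:ℝ), levyDensity c z * Real.exp (-(l*z))
      = Real.exp (-Real.sqrt (2*c*l)) := by
  rw [← phi_img hc,
    integral_image_eq_integral_abs_deriv_smul measurableSet_Ioi (levy_deriv_within hc)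
      (phi_inj hc)]
  have : ∀ u ∈ Ioi (0:ℝ), |(-(c/u^3))| • (levyDensity c (c/(2*u^2)) * Real.exp (-(l * (c/(2*u^2)))))
      = 2/Real.sqrt π * Real.exp (-(u^2 + (Real.sqrt (l*c/2))^2/u^2)) := by
    intro u hu
    have hu0 : (0:ℝ) < u := hu
    rw [smul_eq_mul, abs_neg, abs_of_pos (by positivity : (0:ℝ) < c/u^3)]
    exact levy_transform hc hl hu0
  rw [setIntegral_congr_fun measurableSet_Ioi this, MeasureTheory.integral_const_mul,
    glasser (Real.sqrt_nonneg _)]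
  have hπs : (0:ℝ) < Real.sqrt π := Real.sqrt_pos.mpr pi_pos
  have h4 : 2 * Real.sqrt (l*c/2) = Real.sqrt (2*c*l) := by
    rw [show (2*c*l) = 2^2 * (l*c/2) by ring, Real.sqrt_mul (by positivity),
      Real.sqrt_sq (by norm_num)]
  rw [← h4]
  field_simp

end Laplace
variable {c l z : ℝ} {s : ℂ}

private lemma levy_nonneg : 0 ≤ levyDensity c z := by
  unfold levyDensity
  split
  · positivity
  · exact le_refl 0

private lemma levy_measurable : Measurable (levyDensity c) := by
  unfold levyDensity
  apply Measurable.ite (measurableSet_lt measurable_const measurable_id)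
  · apply Measurable.mul
    · exact (Real.continuous_sqrt.measurable).comp
        (measurable_const.div ((measurable_const.mul (measurable_id.pow_const 3))))
    · exact Real.measurable_exp.comp (measurable_const.div (measurable_const.mul measurable_id))
  · exact measurable_const

private lemma integrand_meas (s : ℂ) :
    AEStronglyMeasurable (fun z : ℝ => (levyDensity c z : ℂ) * Complex.exp (-(s * z)))
      (volume.restrict (Ioi 0)) := by
  apply Measurable.aestronglyMeasurable
  apply Measurable.mul
  · exact Complex.measurable_ofReal.comp levy_measurable
  · exact Complex.measurable_exp.comp
      ((measurable_const.mul Complex.measurable_ofReal).neg)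

private lemma norm_integrand (hs : 0 ≤ s.re) (hz : 0 < z) :
    ‖(levyDensity c z : ℂ) * Complex.exp (-(s * z))‖ ≤ levyDensity c z := by
  rw [norm_mul, Complex.norm_real, Real.norm_eq_abs, abs_of_nonneg levy_nonneg,
    Complex.norm_exp]
  have h1 : (-(s * z)).re = -(s.re * z) := by simp
  rw [h1]
  have h2 : Real.exp (-(s.re * z)) ≤ 1 := by
    rw [show (1:ℝ) = Real.exp 0 by simp]
    apply Real.exp_le_exp.mpr
    nlinarith
  nlinarith [levy_nonneg (c := c) (z := z), Real.exp_pos (-(s.re * z))]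

private lemma levy_integrableOn (hc : 0 < c) : IntegrableOn (levyDensity c) (Ioi 0) := by
  apply (levy_laplace_integrable hc (le_refl 0)).congr
  filter_upwards with z
  simp

private lemma F_integrable (hc : 0 < c) (hs : 0 ≤ s.re) :
    IntegrableOn (fun z : ℝ => (levyDensity c z : ℂ) * Complex.exp (-(s * z))) (Ioi 0) := by
  apply (levy_integrableOn hc).mono' (integrand_meas s)
  filter_upwards [ae_restrict_mem measurableSet_Ioi] with z hz
  exact norm_integrand hs hz

private lemma F_real (hc : 0 < c) (hl : 0 ≤ l) :
    ∫ z in Ioi (0:ℝ), (levyDensity c z : ℂ) * Complex.exp (-((l:ℂ) * z))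
      = (Real.exp (-Real.sqrt (2*c*l)) : ℂ) := by
  calc ∫ z in Ioi (0:ℝ), (levyDensity c z : ℂ) * Complex.exp (-((l:ℂ) * z))
      = ∫ z in Ioi (0:ℝ), ((levyDensity c z * Real.exp (-(l*z)) : ℝ) : ℂ) := by
        apply setIntegral_congr_fun measurableSet_Ioi
        intro z hz
        push_cast
        ring
    _ = ((∫ z in Ioi (0:ℝ), levyDensity c z * Real.exp (-(l*z)) : ℝ) : ℂ) := integral_ofReal
    _ = (Real.exp (-Real.sqrt (2*c*l)) : ℂ) := by rw [levy_laplace_real hc hl]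

open Metric in
private lemma F_diffAt (hc : 0 < c) (hs : 0 < s.re) :
    DifferentiableAt ℂ
      (fun s : ℂ => ∫ z in Ioi (0:ℝ), (levyDensity c z : ℂ) * Complex.exp (-(s * z))) s := by
  set ε := s.re/2 with hε_def
  have hε : 0 < ε := by positivity
  have key := hasDerivAt_integral_of_dominated_loc_of_deriv_le
    (μ := volume.restrict (Ioi (0:ℝ)))
    (F := fun (x : ℂ) (z : ℝ) => (levyDensity c z : ℂ) * Complex.exp (-(x * z)))
    (F' := fun (x : ℂ) (z : ℝ) => (levyDensity c z : ℂ) * (Complex.exp (-(x * z)) * (-(z:ℂ))))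
    (x₀ := s) (bound := fun z => (1/ε) * levyDensity c z) (s := ball s ε) (ball_mem_nhds s hε)
    (Eventually.of_forall (fun x => integrand_meas x))
    (F_integrable hc hs.le)
    ?_ ?_ ?_ ?_
  · exact key.2.differentiableAt
  · apply Measurable.aestronglyMeasurable
    exact (Complex.measurable_ofReal.comp levy_measurable).mul
      ((Complex.measurable_exp.comp ((measurable_const.mul Complex.measurable_ofReal).neg)).mul
        Complex.measurable_ofReal.neg)
  · -- bound
    filter_upwards [ae_restrict_mem measurableSet_Ioi] with z hz x hx
    have hz0 : (0:ℝ) < z := hz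
    have hxre : ε ≤ x.re := by
      have h1 : |(x - s).re| ≤ ‖x - s‖ := Complex.abs_re_le_norm _
      have h2 : ‖x - s‖ < ε := by
        rw [← Complex.dist_eq]
        exact mem_ball.mp hx
      have h3 : |x.re - s.re| < ε := by
        simpa using lt_of_le_of_lt h1 h2
      have := abs_lt.mp h3
      simp only [hε_def] at *
      linarith [this.1]
    have hnorm : ‖(levyDensity c z : ℂ) * (Complex.exp (-(x * z)) * (-(z:ℂ)))‖
        = levyDensity c z * (Real.exp (-(x.re * z)) * z) := by
      rw [norm_mul, norm_mul, Complex.norm_real, Real.norm_eq_abs, abs_of_nonneg levy_nonneg,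
        norm_neg, Complex.norm_real, Real.norm_eq_abs, abs_of_pos hz0,
        Complex.norm_exp]
      congr 3
      simp
    rw [hnorm]
    have hexp : Real.exp (-(x.re * z)) ≤ Real.exp (-(ε * z)) := by
      apply Real.exp_le_exp.mpr
      nlinarith
    have key1 : z * Real.exp (-(ε*z)) ≤ 1/ε := by
      have hEpos := Real.exp_pos (ε*z)
      rw [Real.exp_neg, le_div_iff₀ hε,
        show z * (Real.exp (ε*z))⁻¹ * ε = (ε*z) / Real.exp (ε*z) by ring, div_le_one hEpos]
      linarith [Real.add_one_le_exp (ε*z)]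
    calc levyDensity c z * (Real.exp (-(x.re * z)) * z)
        ≤ levyDensity c z * (Real.exp (-(ε * z)) * z) := by
          apply mul_le_mul_of_nonneg_left _ levy_nonneg
          apply mul_le_mul_of_nonneg_right hexp hz0.le
      _ ≤ levyDensity c z * (1/ε) := by
          apply mul_le_mul_of_nonneg_left _ levy_nonneg
          rw [mul_comm]; exact key1
      _ = 1/ε * levyDensity c z := by ring
  · exact (levy_integrableOn hc).const_mul (1/ε)
  · filter_upwards with z x _
    have h1 : HasDerivAt (fun x : ℂ => -(x * (z:ℂ))) (-(z:ℂ)) x := (hasDerivAt_mul_const (z:ℂ)).neg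
    exact (h1.cexp).const_mul ((levyDensity c z : ℂ))

private lemma cpow_half_of_pos {t : ℝ} (ht : 0 < t) :
    (-(Complex.I * t)) ^ (1/2 : ℂ)
      = ((Real.sqrt t / Real.sqrt 2 : ℝ) : ℂ) * (1 - Complex.I) := by
  have hz : (-(Complex.I * (t:ℂ))) ≠ 0 := by
    simp [Complex.ext_iff]
    intro h; linarith
  rw [Complex.cpow_def_of_ne_zero hz]
  have harg : (-(Complex.I * (t:ℂ))) = (t:ℂ) * (-Complex.I) := by ring
  have habs : ‖(-(Complex.I * (t:ℂ)))‖ = t := by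
    rw [harg, norm_mul, Complex.norm_real, Real.norm_eq_abs, abs_of_pos ht, norm_neg, Complex.norm_I, mul_one]
  have harg2 : Complex.arg (-(Complex.I * (t:ℂ))) = -(π/2) := by
    rw [harg, Complex.arg_real_mul _ ht, Complex.arg_neg_I]
  have hlog : Complex.log (-(Complex.I * (t:ℂ)))
      = (Real.log t : ℂ) + (-(π/2) : ℝ) * Complex.I := by
    rw [Complex.log, habs, harg2]
  rw [hlog]
  rw [show ((Real.log t : ℂ) + (-(π/2) : ℝ) * Complex.I) * (1/2 : ℂ)
      = ((Real.log t / 2 : ℝ) : ℂ) + ((-(π/4) : ℝ) : ℂ) * Complex.I by push_cast; ring]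
  rw [Complex.exp_add, Complex.exp_mul_I, ← Complex.ofReal_exp, ← Complex.ofReal_cos,
    ← Complex.ofReal_sin]
  have hexp : Real.exp (Real.log t / 2) = Real.sqrt t := by
    rw [Real.sqrt_eq_rpow, Real.rpow_def_of_pos ht]
    ring_nf
  have hcos : Real.cos (-(π/4)) = Real.sqrt 2 / 2 := by
    rw [Real.cos_neg, Real.cos_pi_div_four]
  have hsin : Real.sin (-(π/4)) = -(Real.sqrt 2 / 2) := by
    rw [Real.sin_neg, Real.sin_pi_div_four]
  rw [hexp, hcos, hsin]
  have h2 : Real.sqrt 2 ≠ 0 := by positivity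
  have h22 : Real.sqrt 2 * Real.sqrt 2 = 2 := Real.mul_self_sqrt (by norm_num)
  rw [Complex.ext_iff]
  constructor
  · simp
    field_simp
    rw [sq, h22]
  · simp
    field_simp
    rw [sq, h22]

private lemma cpow_half_of_neg {t : ℝ} (ht : t < 0) :
    (-(Complex.I * t)) ^ (1/2 : ℂ)
      = ((Real.sqrt (-t) / Real.sqrt 2 : ℝ) : ℂ) * (1 + Complex.I) := by
  have hz : (-(Complex.I * (t:ℂ))) ≠ 0 := by
    simp [Complex.ext_iff]
    intro h; linarith
  rw [Complex.cpow_def_of_ne_zero hz]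
  have harg : (-(Complex.I * (t:ℂ))) = ((-t : ℝ):ℂ) * Complex.I := by push_cast; ring
  have habs : ‖(-(Complex.I * (t:ℂ)))‖ = -t := by
    rw [harg, norm_mul, Complex.norm_real, Real.norm_eq_abs, abs_of_pos (by linarith : (0:ℝ) < -t), Complex.norm_I,
      mul_one]
  have harg2 : Complex.arg (-(Complex.I * (t:ℂ))) = π/2 := by
    rw [harg, Complex.arg_real_mul _ (by linarith : (0:ℝ) < -t), Complex.arg_I]
  have hlog : Complex.log (-(Complex.I * (t:ℂ)))
      = (Real.log (-t) : ℂ) + ((π/2) : ℝ) * Complex.I := by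
    rw [Complex.log, habs, harg2]
  rw [hlog]
  rw [show ((Real.log (-t) : ℂ) + ((π/2) : ℝ) * Complex.I) * (1/2 : ℂ)
      = ((Real.log (-t) / 2 : ℝ) : ℂ) + (((π/4) : ℝ) : ℂ) * Complex.I by push_cast; ring]
  rw [Complex.exp_add, Complex.exp_mul_I, ← Complex.ofReal_exp, ← Complex.ofReal_cos,
    ← Complex.ofReal_sin]
  have hexp : Real.exp (Real.log (-t) / 2) = Real.sqrt (-t) := by
    rw [Real.sqrt_eq_rpow, Real.rpow_def_of_pos (by linarith : (0:ℝ) < -t)]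
    ring_nf
  rw [hexp, Real.cos_pi_div_four, Real.sin_pi_div_four]
  have h2 : Real.sqrt 2 ≠ 0 := by positivity
  have h22 : Real.sqrt 2 * Real.sqrt 2 = 2 := Real.mul_self_sqrt (by norm_num)
  rw [Complex.ext_iff]
  constructor
  · simp
    field_simp
    rw [sq, h22]
  · simp
    field_simp
    rw [sq, h22]

private lemma G_real (hc : 0 < c) (hl : 0 < l) :
    Complex.exp (-(Real.sqrt (2*c) : ℂ) * (l:ℂ) ^ (1/2 : ℂ))
      = (Real.exp (-Real.sqrt (2*c*l)) : ℂ) := by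
  have h1 : (l:ℂ) ^ (1/2 : ℂ) = ((Real.sqrt l : ℝ) : ℂ) := by
    rw [show (1/2 : ℂ) = ((1/2 : ℝ) : ℂ) by norm_num, ← Complex.ofReal_cpow hl.le]
    rw [← Real.sqrt_eq_rpow]
  rw [h1, show -(Real.sqrt (2*c):ℂ) * ((Real.sqrt l :ℝ):ℂ)
      = ((-(Real.sqrt (2*c) * Real.sqrt l):ℝ):ℂ) by push_cast; ring, ← Complex.ofReal_exp]
  congr 2
  rw [show (2*c*l) = (2*c) * l by ring, Real.sqrt_mul (by positivity) l]

private lemma F_eqOn_G (hc : 0 < c) :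
    EqOn (fun s : ℂ => ∫ z in Ioi (0:ℝ), (levyDensity c z : ℂ) * Complex.exp (-(s * z)))
      (fun s : ℂ => Complex.exp (-(Real.sqrt (2*c) : ℂ) * s ^ (1/2 : ℂ)))
      {s : ℂ | 0 < s.re} := by
  have hopen : IsOpen {s : ℂ | 0 < s.re} := isOpen_lt continuous_const Complex.continuous_re
  apply AnalyticOnNhd.eqOn_of_preconnected_of_frequently_eq (𝕜 := ℂ) (z₀ := (1:ℂ))
  · apply DifferentiableOn.analyticOnNhd _ hopen
    exact fun s hs => (F_diffAt hc hs).differentiableWithinAt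
  · apply DifferentiableOn.analyticOnNhd _ hopen
    intro s hs
    apply DifferentiableAt.differentiableWithinAt
    have hslit : s ∈ Complex.slitPlane := Or.inl hs
    exact (((differentiableAt_id.cpow (differentiableAt_const _) hslit)).const_mul _).cexp
  · exact (convex_halfSpace_re_gt 0).isPreconnected
  · simp
  · have hseq : Tendsto (fun n : ℕ => ((1 + 1/(n+1) : ℝ) : ℂ)) atTop (𝓝[≠] 1) := by
      apply tendsto_nhdsWithin_of_tendsto_nhds_of_eventually_within
      · have h0 : Tendsto (fun n : ℕ => (1 + 1/(n+1) : ℝ)) atTop (𝓝 1) := by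
          simpa using (tendsto_const_nhds (x := (1:ℝ))).add tendsto_one_div_add_atTop_nhds_zero_nat
        have := (Complex.continuous_ofReal.tendsto 1).comp h0
        simpa [Function.comp_def] using this
      · filter_upwards with n
        intro h
        rw [mem_singleton_iff] at h
        have : (1 + 1/(n+1) : ℝ) = 1 := by exact_mod_cast h
        have hn : (0:ℝ) < 1/(n+1) := by positivity
        linarith
    apply hseq.frequently
    apply Frequently.of_forall
    intro n
    have hl : (0:ℝ) < 1 + 1/(n+1) := by positivity
    show (∫ z in Ioi (0:ℝ), (levyDensity c z : ℂ)
        * Complex.exp (-((((1 + 1/(n+1):ℝ)):ℂ) * z)))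
      = Complex.exp (-(Real.sqrt (2*c) : ℂ) * (((1 + 1/(n+1):ℝ)):ℂ) ^ (1/2 : ℂ))
    rw [F_real hc hl.le, G_real hc hl]

/-- The characteristic function of the Lévy distribution with location 0 and scale `c`:
`∫_{(0,∞)} exp(itz) f_c(z) dz = exp(−√(c|t|)·(1 − i·sgn t))`. -/
theorem levy_characteristic_function (c : ℝ) (hc : 0 < c) (t : ℝ) :
    ∫ z in Set.Ioi (0 : ℝ), Complex.exp (Complex.I * t * z) * (levyDensity c z : ℂ)
      = Complex.exp (-(Real.sqrt (c * |t|) : ℂ) * (1 - Complex.I * (Real.sign t : ℝ))) := by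
  rcases eq_or_ne t 0 with rfl | ht
  · have h0 : ∀ z ∈ Ioi (0:ℝ), Complex.exp (Complex.I * (0:ℝ) * z) * (levyDensity c z : ℂ)
        = (levyDensity c z : ℂ) * Complex.exp (-(((0:ℝ):ℂ) * z)) := by
      intro z hz
      simp
    rw [setIntegral_congr_fun measurableSet_Ioi h0, F_real hc le_rfl]
    norm_num [Real.sign_zero]
  · set s₀ : ℂ := -(Complex.I * t) with hs₀
    have hs₀re : s₀.re = 0 := by simp [hs₀]
    have hIm : s₀.im = -t := by simp [hs₀]
    have hLHS : (∫ z in Ioi (0:ℝ), Complex.exp (Complex.I * t * z) * (levyDensity c z : ℂ))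
        = ∫ z in Ioi (0:ℝ), (levyDensity c z : ℂ) * Complex.exp (-(s₀ * z)) := by
      apply setIntegral_congr_fun measurableSet_Ioi
      intro z hz
      rw [mul_comm]
      congr 2
      rw [hs₀]
      ring
    set sn : ℕ → ℂ := fun n => s₀ + ((1/(n+1) : ℝ) : ℂ) with hsn
    have hsnre : ∀ n : ℕ, (sn n).re = 1/(n+1) := by
      intro n
      simp only [hsn, Complex.add_re, Complex.ofReal_re, hs₀re, zero_add]
    have hsnU : ∀ n : ℕ, sn n ∈ {s : ℂ | 0 < s.re} := by
      intro n
      have : (0:ℝ) < 1/((n:ℝ)+1) := by positivity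
      simpa [mem_setOf_eq, hsnre n] using this
    have htend : Tendsto sn atTop (𝓝 s₀) := by
      have h0 : Tendsto (fun n : ℕ => (1/(n+1) : ℝ)) atTop (𝓝 0) :=
        tendsto_one_div_add_atTop_nhds_zero_nat
      have h2 : Tendsto (fun n : ℕ => ((1/(n+1):ℝ):ℂ)) atTop (𝓝 0) := by
        simpa [Function.comp_def] using (Complex.continuous_ofReal.tendsto 0).comp h0
      rw [show (𝓝 s₀) = 𝓝 (s₀ + 0) by rw [add_zero]]
      exact tendsto_const_nhds.add h2
    have hFt : Tendsto (fun n => ∫ z in Ioi (0:ℝ),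
          (levyDensity c z : ℂ) * Complex.exp (-(sn n * z))) atTop
        (𝓝 (∫ z in Ioi (0:ℝ), (levyDensity c z : ℂ) * Complex.exp (-(s₀ * z)))) := by
      apply tendsto_integral_of_dominated_convergence (bound := levyDensity c)
        (fun n => integrand_meas (sn n)) (levy_integrableOn hc)
      · intro n
        filter_upwards [ae_restrict_mem measurableSet_Ioi] with z hz
        exact norm_integrand (by rw [hsnre n]; positivity) hz
      · filter_upwards with z
        have hcont : Continuous (fun x : ℂ => (levyDensity c z : ℂ) * Complex.exp (-(x * z))) := by
          continuity
        have := (hcont.tendsto s₀).comp htend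
        simpa [Function.comp_def] using this
    have hslit : s₀ ∈ Complex.slitPlane := by
      right
      rw [hIm]
      simpa using ht
    have hGcont : ContinuousAt
        (fun s : ℂ => Complex.exp (-(Real.sqrt (2*c) : ℂ) * s ^ (1/2:ℂ))) s₀ := by
      apply Complex.continuous_exp.continuousAt.comp
      exact continuousAt_const.mul (continuousAt_cpow_const hslit)
    have hGt : Tendsto (fun n => Complex.exp (-(Real.sqrt (2*c) : ℂ) * (sn n) ^ (1/2:ℂ))) atTop
        (𝓝 (Complex.exp (-(Real.sqrt (2*c) : ℂ) * s₀ ^ (1/2:ℂ)))) := by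
      have := hGcont.tendsto.comp htend
      simpa [Function.comp_def] using this
    have hFG : (∫ z in Ioi (0:ℝ), (levyDensity c z : ℂ) * Complex.exp (-(s₀ * z)))
        = Complex.exp (-(Real.sqrt (2*c) : ℂ) * s₀ ^ (1/2:ℂ)) := by
      have hFt' : Tendsto (fun n => Complex.exp (-(Real.sqrt (2*c) : ℂ) * (sn n) ^ (1/2:ℂ))) atTop
          (𝓝 (∫ z in Ioi (0:ℝ), (levyDensity c z : ℂ) * Complex.exp (-(s₀ * z)))) := by
        apply hFt.congr
        intro n
        exact F_eqOn_G hc (hsnU n)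
      exact tendsto_nhds_unique hFt' hGt
    rw [hLHS, hFG]
    congr 1
    rcases ht.lt_or_gt with hneg | hpos
    · rw [hs₀, cpow_half_of_neg hneg, Real.sign_of_neg hneg]
      have habs : |t| = -t := abs_of_neg hneg
      have hco : Real.sqrt (2*c) * (Real.sqrt (-t) / Real.sqrt 2) = Real.sqrt (c * |t|) := by
        rw [habs, show c * (-t) = (2*c*(-t))/2 by ring, Real.sqrt_div (by nlinarith : (0:ℝ) ≤ 2*c*(-t)) 2,
          Real.sqrt_mul (by positivity : (0:ℝ) ≤ 2*c) (-t)]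
        ring
      rw [← hco]
      push_cast
      ring
    · rw [hs₀, cpow_half_of_pos hpos, Real.sign_of_pos hpos]
      have habs : |t| = t := abs_of_pos hpos
      have hco : Real.sqrt (2*c) * (Real.sqrt t / Real.sqrt 2) = Real.sqrt (c * |t|) := by
        rw [habs, show c * t = (2*c*t)/2 by ring, Real.sqrt_div (by nlinarith : (0:ℝ) ≤ 2*c*t) 2,
          Real.sqrt_mul (by positivity : (0:ℝ) ≤ 2*c) t]
        ring
      rw [← hco]
      push_cast
      ring
end

section
/- Let c > 0 and Δ > 0 and define g(x) = log((x − Δ)/x) + cΔ/(3·x·(x − Δ)) for x > Δ. Then there is a unique x* > Δ with g(x*) = 0; moreover g(x) > 0 for all x with Δ < x < x*, and g(x) < 0 for all x > x*. -/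
open Real Set

/-- Auxiliary function: `h x = 3x(x-Δ) g x` where `g` is the LLR term. -/
private noncomputable def hfun (c Δ x : ℝ) : ℝ :=
  3 * x * (x - Δ) * Real.log ((x - Δ) / x) + c * Δ

private lemma log_lt_aux {u : ℝ} (h0 : 0 < u) (h1 : u < 1) :
    Real.log u < (u - 1) / (u + 1) := by
  set s := Real.sqrt u with hs
  have hs0 : 0 < s := Real.sqrt_pos.2 h0
  have hs2 : s ^ 2 = u := Real.sq_sqrt h0.le
  have hs1 : s < 1 := by nlinarith
  have hlog : Real.log u = 2 * Real.log s := by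
    rw [hs, Real.log_sqrt h0.le]; ring
  have h2 : Real.log s < s - 1 := Real.log_lt_sub_one_of_pos hs0 (by linarith)
  have h3 : 2 * (s - 1) ≤ (u - 1) / (u + 1) := by
    rw [le_div_iff₀ (by linarith : (0:ℝ) < u + 1)]
    nlinarith [mul_pos (by linarith : (0:ℝ) < 1 - s)
      (by nlinarith [sq_nonneg (4*s - 1)] : (0:ℝ) < 2*s^2 - s + 1)]
  linarith

/-- The key bound `log ((x-Δ)/x) < -Δ/(2x-Δ)`. -/
private lemma log_lt_bound {Δ x : ℝ} (hΔ : 0 < Δ) (hx : Δ < x) :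
    Real.log ((x - Δ) / x) < -Δ / (2 * x - Δ) := by
  have hx0 : 0 < x := hΔ.trans hx
  have hxd : 0 < x - Δ := sub_pos.2 hx
  have h2x : 0 < 2 * x - Δ := by linarith
  have hu0 : 0 < (x - Δ) / x := div_pos hxd hx0
  have hu1 : (x - Δ) / x < 1 := by rw [div_lt_one hx0]; linarith
  have hlt := log_lt_aux hu0 hu1
  have hne : (x - Δ) / x + 1 ≠ 0 := by positivity
  have hq : ((x - Δ) / x - 1) / ((x - Δ) / x + 1) = -Δ / (2 * x - Δ) := by
    rw [div_eq_div_iff hne h2x.ne']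
    field_simp
    ring_nf
  rwa [hq] at hlt

private lemma hfun_hasDerivAt (c Δ : ℝ) {x : ℝ} (hΔ : 0 < Δ) (hx : Δ < x) :
    HasDerivAt (hfun c Δ)
      (3 * ((2 * x - Δ) * Real.log ((x - Δ) / x) + Δ)) x := by
  have hx0 : 0 < x := hΔ.trans hx
  have hxd : 0 < x - Δ := sub_pos.2 hx
  have hL1 : HasDerivAt (fun y : ℝ => Real.log (y - Δ)) (1 / (x - Δ)) x := by
    simpa using (((hasDerivAt_id x).sub_const Δ).log hxd.ne')
  have hL2 : HasDerivAt (fun y : ℝ => Real.log y) (1 / x) x := by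
    simpa using (Real.hasDerivAt_log hx0.ne')
  have hP : HasDerivAt (fun y : ℝ => 3 * y * (y - Δ)) (3 * (2 * x - Δ)) x := by
    have h := ((hasDerivAt_id x).const_mul (3:ℝ)).mul ((hasDerivAt_id x).sub_const Δ)
    simp only [id_eq] at h
    exact h.congr_deriv (by ring)
  have hprod : HasDerivAt
      (fun y : ℝ => 3 * y * (y - Δ) * (Real.log (y - Δ) - Real.log y) + c * Δ)
      (3 * ((2 * x - Δ) * Real.log ((x - Δ) / x) + Δ)) x := by
    have h := (hP.mul (hL1.sub hL2)).add_const (c * Δ)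
    refine h.congr_deriv ?_
    simp only [Pi.sub_apply]
    rw [Real.log_div hxd.ne' hx0.ne']
    field_simp
    ring
  refine hprod.congr_of_eventuallyEq ?_
  filter_upwards [Ioi_mem_nhds hx] with y hy
  have hy0 : 0 < y := hΔ.trans hy
  have hyd : 0 < y - Δ := sub_pos.2 hy
  rw [hfun, Real.log_div hyd.ne' hy0.ne']

private lemma hfun_anti (c Δ : ℝ) (hΔ : 0 < Δ) :
    StrictAntiOn (hfun c Δ) (Set.Ioi Δ) := by
  refine strictAntiOn_of_deriv_neg (convex_Ioi Δ) ?_ ?_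
  · intro x hx
    exact ((hfun_hasDerivAt c Δ hΔ hx).differentiableAt.continuousAt).continuousWithinAt
  · intro x hx
    rw [interior_Ioi] at hx
    have hxΔ : Δ < x := hx
    rw [(hfun_hasDerivAt c Δ hΔ hxΔ).deriv]
    have hx0 : 0 < x := hΔ.trans hxΔ
    have h2x : 0 < 2 * x - Δ := by linarith
    have hlt := log_lt_bound hΔ hxΔ
    have h := mul_lt_mul_of_pos_left hlt h2x
    have he : (2 * x - Δ) * (-Δ / (2 * x - Δ)) = -Δ := by
      rw [mul_comm, div_mul_cancel₀ _ h2x.ne']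
    rw [he] at h
    linarith

/-- The per-sample log-likelihood-ratio `g(x) = log((x−Δ)/x) + cΔ/(3x(x−Δ))` of the
`M`-particle ML detector has a unique zero `x* > Δ`; moreover `g > 0` on `(Δ, x*)`
and `g < 0` on `(x*, ∞)`. -/
theorem unique_sign_change (c Δ : ℝ) (hc : 0 < c) (hΔ : 0 < Δ) :
    ∃ xs : ℝ, Δ < xs ∧
      Real.log ((xs - Δ) / xs) + c * Δ / (3 * xs * (xs - Δ)) = 0 ∧
      (∀ y : ℝ, Δ < y → Real.log ((y - Δ) / y) + c * Δ / (3 * y * (y - Δ)) = 0 → y = xs) ∧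
      (∀ x : ℝ, Δ < x → x < xs → 0 < Real.log ((x - Δ) / x) + c * Δ / (3 * x * (x - Δ))) ∧
      (∀ x : ℝ, xs < x → Real.log ((x - Δ) / x) + c * Δ / (3 * x * (x - Δ)) < 0) := by
  have hA := hfun_anti c Δ hΔ
  -- `hfun` in terms of `g`
  have hfac : ∀ x : ℝ, Δ < x → hfun c Δ x
      = (3 * x * (x - Δ)) * (Real.log ((x - Δ) / x) + c * Δ / (3 * x * (x - Δ))) := by
    intro x hx
    have hx0 : (0:ℝ) < x := hΔ.trans hx
    have hxd : (0:ℝ) < x - Δ := sub_pos.2 hx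
    rw [hfun]
    field_simp
  -- point where hfun is positive, close to Δ
  set ε : ℝ := min Δ (c ^ 2 / (289 * Δ)) with hε
  have hε0 : 0 < ε := lt_min hΔ (by positivity)
  have hεΔ : ε ≤ Δ := min_le_left _ _
  have hεc : ε ≤ c ^ 2 / (289 * Δ) := min_le_right _ _
  set x₁ : ℝ := Δ + ε with hx₁def
  have hx₁Δ : Δ < x₁ := by rw [hx₁def]; linarith
  have hx₁0 : 0 < x₁ := hΔ.trans hx₁Δ
  have hx₁2 : x₁ ≤ 2 * Δ := by rw [hx₁def]; linarith
  have hx₁d : x₁ - Δ = ε := by ring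
  have hh1 : 0 < hfun c Δ x₁ := by
    set s : ℝ := Real.sqrt ε with hsdef
    set t : ℝ := Real.sqrt x₁ with htdef
    have hs0 : 0 < s := Real.sqrt_pos.2 hε0
    have ht0 : 0 < t := Real.sqrt_pos.2 hx₁0
    have hs2 : s ^ 2 = ε := Real.sq_sqrt hε0.le
    have ht2 : t ^ 2 = x₁ := Real.sq_sqrt hx₁0.le
    have hu : (x₁ - Δ) / x₁ = ε / x₁ := by rw [hx₁d]
    have hu0 : 0 < ε / x₁ := by positivity
    have hsqu : Real.sqrt (ε / x₁) = s / t := by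
      rw [Real.sqrt_div hε0.le]
    -- log (ε/x₁) ≥ -2 t / s
    have hlog : -(2 * (t / s)) ≤ Real.log (ε / x₁) := by
      have h1 : Real.log ((s / t)⁻¹) ≤ (s / t)⁻¹ - 1 :=
        Real.log_le_sub_one_of_pos (by positivity)
      rw [Real.log_inv, inv_div] at h1
      have hlogu : Real.log (ε / x₁) = 2 * Real.log (s / t) := by
        rw [← hsqu, Real.log_sqrt hu0.le]
        ring
      have hts : 0 < t / s := by positivity
      linarith
    -- key size bound
    have h36 : 36 * x₁ ^ 3 * ε < c ^ 2 * Δ ^ 2 := by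
      have hcube : x₁ ^ 3 ≤ 8 * Δ ^ 3 := by
        nlinarith [mul_nonneg (by linarith : (0:ℝ) ≤ 2 * Δ - x₁)
          (by positivity : (0:ℝ) ≤ 4 * Δ ^ 2 + 2 * Δ * x₁ + x₁ ^ 2)]
      have hΔε : Δ * ε ≤ c ^ 2 / 289 := by
        rw [le_div_iff₀ (by norm_num : (0:ℝ) < 289)]
        calc Δ * ε * 289 = 289 * Δ * ε := by ring
          _ ≤ 289 * Δ * (c ^ 2 / (289 * Δ)) := by
              apply mul_le_mul_of_nonneg_left hεc (by positivity)
          _ = c ^ 2 := by field_simp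
      have e1 : x₁ ^ 3 * ε ≤ 8 * Δ ^ 3 * ε := mul_le_mul_of_nonneg_right hcube hε0.le
      have e2 : Δ ^ 2 * (Δ * ε) ≤ Δ ^ 2 * (c ^ 2 / 289) :=
        mul_le_mul_of_nonneg_left hΔε (sq_nonneg Δ)
      have e3 : 0 < c ^ 2 * Δ ^ 2 := by positivity
      nlinarith [e1, e2, e3]
    have hkey : 6 * t ^ 3 * s < c * Δ := by
      have hsq : (6 * t ^ 3 * s) ^ 2 = 36 * x₁ ^ 3 * ε := by
        rw [← hs2, ← ht2]; ring
      have : (6 * t ^ 3 * s) ^ 2 < (c * Δ) ^ 2 := by rw [hsq]; nlinarith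
      exact lt_of_pow_lt_pow_left₀ 2 (by positivity) this
    -- combine
    have hmul : 3 * x₁ * ε * (-(2 * (t / s))) ≤ 3 * x₁ * ε * Real.log (ε / x₁) :=
      mul_le_mul_of_nonneg_left hlog (by positivity)
    have heq : 3 * x₁ * ε * (-(2 * (t / s))) = -(6 * t ^ 3 * s) := by
      rw [← hs2, ← ht2]; field_simp; ring
    rw [hfun, hx₁d]
    rw [heq] at hmul
    linarith
  -- point where hfun is negative
  set x₂ : ℝ := Δ + c with hx₂def
  have hx₂Δ : Δ < x₂ := by rw [hx₂def]; linarith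
  have hx₂0 : 0 < x₂ := hΔ.trans hx₂Δ
  have hx₂d : 0 < x₂ - Δ := sub_pos.2 hx₂Δ
  have h2x₂ : 0 < 2 * x₂ - Δ := by linarith
  have hh2 : hfun c Δ x₂ < 0 := by
    have h1 := log_lt_bound hΔ hx₂Δ
    have h2 : 3 * x₂ * (x₂ - Δ) * Real.log ((x₂ - Δ) / x₂)
        < 3 * x₂ * (x₂ - Δ) * (-Δ / (2 * x₂ - Δ)) :=
      mul_lt_mul_of_pos_left h1 (by positivity)
    have h3 : c * Δ ≤ 3 * x₂ * (x₂ - Δ) * Δ / (2 * x₂ - Δ) := by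
      rw [le_div_iff₀ h2x₂]
      have hcd : x₂ - Δ = c := by rw [hx₂def]; ring
      rw [hcd]
      nlinarith [mul_nonneg (mul_pos hc hΔ).le (by linarith : (0:ℝ) ≤ x₂ + Δ)]
    have h4 : 3 * x₂ * (x₂ - Δ) * (-Δ / (2 * x₂ - Δ))
        = -(3 * x₂ * (x₂ - Δ) * Δ / (2 * x₂ - Δ)) := by ring
    rw [hfun]
    linarith [h2, h3, h4 ▸ h2]
  -- IVT
  have hx12 : x₁ < x₂ := by
    rcases lt_trichotomy x₁ x₂ with h | h | h
    · exact h
    · exfalso; rw [h] at hh1; linarith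
    · exfalso
      have := hA (Set.mem_Ioi.2 hx₂Δ) (Set.mem_Ioi.2 hx₁Δ) h
      linarith
  have hcont : ContinuousOn (hfun c Δ) (Set.Icc x₁ x₂) := fun x hx =>
    ((hfun_hasDerivAt c Δ hΔ (lt_of_lt_of_le hx₁Δ hx.1)).differentiableAt.continuousAt).continuousWithinAt
  obtain ⟨xs, hxsmem, hxs0⟩ :=
    intermediate_value_Icc' hx12.le hcont ⟨hh2.le, hh1.le⟩
  have hxsΔ : Δ < xs := lt_of_lt_of_le hx₁Δ hxsmem.1
  have hxs0' : hfun c Δ xs = 0 := hxs0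
  have hxspos : 0 < 3 * xs * (xs - Δ) := by
    have h1 : 0 < xs := hΔ.trans hxsΔ
    have h2 : 0 < xs - Δ := sub_pos.2 hxsΔ
    positivity
  refine ⟨xs, hxsΔ, ?_, ?_, ?_, ?_⟩
  · have h := hfac xs hxsΔ
    rw [hxs0'] at h
    rcases mul_eq_zero.1 h.symm with h' | h'
    · exact absurd h' (ne_of_gt hxspos)
    · exact h'
  · intro y hy hy0
    have hyz : hfun c Δ y = 0 := by rw [hfac y hy, hy0, mul_zero]
    exact hA.injOn (Set.mem_Ioi.2 hy) (Set.mem_Ioi.2 hxsΔ) (hyz.trans hxs0'.symm)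
  · intro x hx hxlt
    have hv : 0 < hfun c Δ x := by
      have := hA (Set.mem_Ioi.2 hx) (Set.mem_Ioi.2 hxsΔ) hxlt
      rw [hxs0'] at this; exact this
    rw [hfac x hx] at hv
    have hxpos : 0 < 3 * x * (x - Δ) := by
      have h1 : 0 < x := hΔ.trans hx
      have h2 : 0 < x - Δ := sub_pos.2 hx
      positivity
    by_contra hle
    push_neg at hle
    linarith [mul_nonpos_of_nonneg_of_nonpos hxpos.le hle]
  · intro x hx
    have hxΔ := hxsΔ.trans hx
    have hv : hfun c Δ x < 0 := by
      have := hA (Set.mem_Ioi.2 hxsΔ) (Set.mem_Ioi.2 hxΔ) hx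
      rw [hxs0'] at this; exact this
    rw [hfac x hxΔ] at hv
    have hxpos : 0 < 3 * x * (x - Δ) := by
      have h1 : 0 < x := hΔ.trans hxΔ
      have h2 : 0 < x - Δ := sub_pos.2 hxΔ
      positivity
    by_contra hge
    push_neg at hge
    linarith [mul_nonneg hxpos.le hge]
end

section
/- Let c > 0 and Δ > 0 and define g(x) = log((x − Δ)/x) + cΔ/(3·x·(x − Δ)) for x > Δ. Let x₁ = c/3 + (Δ/2)·(1 + √(1 + 4c²/(9Δ²))). Then x₁ > Δ, g is strictly decreasing on (Δ, x₁] and strictly increasing on [x₁, ∞); moreover g(x) tends to +∞ as x tends to Δ from the right, and g(x) tends to 0 as x tends to +∞. -/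
open Filter

set_option maxHeartbeats 1000000

/-- Shape of the per-sample log-likelihood-ratio `g` of the `M`-particle ML detector:
with `x₁ = c/3 + (Δ/2)(1 + √(1 + 4c²/(9Δ²)))` one has `x₁ > Δ`, `g` is strictly
decreasing on `(Δ, x₁]` and strictly increasing on `[x₁, ∞)`, `g → +∞` as `x → Δ⁺`,
and `g → 0` as `x → +∞`. -/
theorem g_shape (c Δ : ℝ) (hc : 0 < c) (hΔ : 0 < Δ) :
    Δ < c / 3 + (Δ / 2) * (1 + Real.sqrt (1 + 4 * c ^ 2 / (9 * Δ ^ 2))) ∧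
    StrictAntiOn (fun x : ℝ => Real.log ((x - Δ) / x) + c * Δ / (3 * x * (x - Δ)))
      (Set.Ioc Δ (c / 3 + (Δ / 2) * (1 + Real.sqrt (1 + 4 * c ^ 2 / (9 * Δ ^ 2))))) ∧
    StrictMonoOn (fun x : ℝ => Real.log ((x - Δ) / x) + c * Δ / (3 * x * (x - Δ)))
      (Set.Ici (c / 3 + (Δ / 2) * (1 + Real.sqrt (1 + 4 * c ^ 2 / (9 * Δ ^ 2))))) ∧
    Tendsto (fun x : ℝ => Real.log ((x - Δ) / x) + c * Δ / (3 * x * (x - Δ)))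
      (nhdsWithin Δ (Set.Ioi Δ)) atTop ∧
    Tendsto (fun x : ℝ => Real.log ((x - Δ) / x) + c * Δ / (3 * x * (x - Δ)))
      atTop (nhds 0) := by
  set t := Real.sqrt (1 + 4 * c ^ 2 / (9 * Δ ^ 2)) with ht_def
  have ht2 : t ^ 2 = 1 + 4 * c ^ 2 / (9 * Δ ^ 2) := Real.sq_sqrt (by positivity)
  have htnn : 0 ≤ t := Real.sqrt_nonneg _
  have hΔ2 : (0:ℝ) < Δ ^ 2 := by positivity
  have ht2' : 9 * Δ ^ 2 * t ^ 2 = 9 * Δ ^ 2 + 4 * c ^ 2 := by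
    rw [ht2]; field_simp
  have h4c : 0 ≤ 4 * c ^ 2 / (9 * Δ ^ 2) := by positivity
  have ht1 : 1 ≤ t := by nlinarith [h4c, htnn]
  set x₁ := c / 3 + (Δ / 2) * (1 + t) with hx1_def
  set x₀ := c / 3 + (Δ / 2) * (1 - t) with hx0_def
  have hΔx₁ : Δ < x₁ := by
    have : Δ * 1 ≤ Δ * t := by nlinarith
    rw [hx1_def]; nlinarith
  have hx₀Δ : x₀ < Δ := by
    have ha : 0 ≤ 3 * Δ * t := by positivity
    rw [hx0_def]; nlinarith [ht2', mul_pos hc hΔ, ha]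
  set g : ℝ → ℝ := fun x : ℝ => Real.log ((x - Δ) / x) + c * Δ / (3 * x * (x - Δ)) with hg_def
  have hfac : ∀ x : ℝ, 3 * x ^ 2 - (3 * Δ + 2 * c) * x + c * Δ
      = 3 * (x - x₀) * (x - x₁) := by
    intro x
    rw [hx0_def, hx1_def]
    have h9 : Δ ^ 2 * t ^ 2 = Δ ^ 2 + 4 * c ^ 2 / 9 := by linarith
    nlinarith [h9]
  -- derivative
  have hder : ∀ x : ℝ, Δ < x → HasDerivAt g
      (Δ * (3 * x ^ 2 - (3 * Δ + 2 * c) * x + c * Δ) / (3 * x ^ 2 * (x - Δ) ^ 2)) x := by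
    intro x hx
    have hx0 : (0:ℝ) < x := hΔ.trans hx
    have hxΔ : 0 < x - Δ := sub_pos.2 hx
    have h1 : HasDerivAt (fun y : ℝ => (y - Δ) / y)
        ((1 * x - (x - Δ) * 1) / x ^ 2) x :=
      ((hasDerivAt_id x).sub_const Δ).div (hasDerivAt_id x) hx0.ne'
    have h2 : HasDerivAt (fun y : ℝ => Real.log ((y - Δ) / y))
        (((1 * x - (x - Δ) * 1) / x ^ 2) / ((x - Δ) / x)) x :=
      h1.log (by positivity)
    have h3 : HasDerivAt (fun y : ℝ => 3 * y * (y - Δ)) (3 * (x - Δ) + 3 * x) x := by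
      have := (((hasDerivAt_id x).const_mul (3:ℝ)).mul ((hasDerivAt_id x).sub_const Δ))
      exact this.congr_deriv (by norm_num [id] <;> ring)
    have h4 : HasDerivAt (fun y : ℝ => c * Δ / (3 * y * (y - Δ)))
        ((0 * (3 * x * (x - Δ)) - c * Δ * (3 * (x - Δ) + 3 * x)) / (3 * x * (x - Δ)) ^ 2) x :=
      (hasDerivAt_const x (c * Δ)).div h3 (by positivity)
    have h5 := h2.add h4
    refine h5.congr_deriv ?_
    field_simp
    ring
  have hden : ∀ x : ℝ, Δ < x → 0 < 3 * x ^ 2 * (x - Δ) ^ 2 := by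
    intro x hx
    have hx0 : (0:ℝ) < x := hΔ.trans hx
    have hxΔ : 0 < x - Δ := sub_pos.2 hx
    positivity
  have hcont : ∀ x : ℝ, Δ < x → ContinuousAt g x := fun x hx => (hder x hx).continuousAt
  refine ⟨hΔx₁, ?_, ?_, ?_, ?_⟩
  · -- strict anti on Ioc Δ x₁
    apply strictAntiOn_of_deriv_neg (convex_Ioc Δ x₁)
    · exact fun x hx => (hcont x hx.1).continuousWithinAt
    · rw [interior_Ioc]
      intro x hx
      rw [(hder x hx.1).deriv]
      apply div_neg_of_neg_of_pos _ (hden x hx.1)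
      have hq : 3 * x ^ 2 - (3 * Δ + 2 * c) * x + c * Δ < 0 := by
        rw [hfac x]
        have h1 : 0 < x - x₀ := by linarith [hx.1, hx₀Δ]
        have h2 : x - x₁ < 0 := by linarith [hx.2]
        nlinarith
      exact mul_neg_of_pos_of_neg hΔ hq
  · -- strict mono on Ici x₁
    apply strictMonoOn_of_deriv_pos (convex_Ici x₁)
    · exact fun x hx => (hcont x (hΔx₁.trans_le hx)).continuousWithinAt
    · rw [interior_Ici]
      intro x hx
      have hx' : x₁ < x := hx
      rw [(hder x (hΔx₁.trans hx')).deriv]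
      apply div_pos _ (hden x (hΔx₁.trans hx'))
      have hq : 0 < 3 * x ^ 2 - (3 * Δ + 2 * c) * x + c * Δ := by
        rw [hfac x]
        have h1 : 0 < x - x₀ := by linarith [hx₀Δ, hΔx₁]
        have h2 : 0 < x - x₁ := by linarith
        positivity
      exact mul_pos hΔ hq
  · -- tendsto atTop at Δ⁺
    have hmap : Tendsto (fun x : ℝ => x - Δ) (nhdsWithin Δ (Set.Ioi Δ)) (nhdsWithin 0 (Set.Ioi 0)) := by
      apply tendsto_nhdsWithin_of_tendsto_nhds_of_eventually_within
      · have : Tendsto (fun x : ℝ => x - Δ) (nhds Δ) (nhds (Δ - Δ)) :=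
          (continuous_id.sub continuous_const).tendsto Δ
        simpa using this.mono_left nhdsWithin_le_nhds
      · filter_upwards [self_mem_nhdsWithin] with x hx
        simpa [Set.mem_Ioi, sub_pos] using hx
    have hxtend : Tendsto (fun x : ℝ => x) (nhdsWithin Δ (Set.Ioi Δ)) (nhds Δ) :=
      tendsto_id.mono_left nhdsWithin_le_nhds
    -- (x-Δ) * log (x-Δ) → 0
    have hylogy : Tendsto (fun x : ℝ => Real.log (x - Δ) * (x - Δ))
        (nhdsWithin Δ (Set.Ioi Δ)) (nhds 0) := by
      have := (tendsto_log_mul_rpow_nhdsGT_zero (one_pos)).comp hmap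
      refine this.congr fun x => ?_
      simp [Real.rpow_one]
    -- x * (x - Δ) * g x  → c*Δ/3
    have hnum : Tendsto (fun x : ℝ => 3 * x * ((x - Δ) * Real.log (x - Δ) - (x - Δ) * Real.log x) + c * Δ)
        (nhdsWithin Δ (Set.Ioi Δ)) (nhds (c * Δ)) := by
      have h1 : Tendsto (fun x : ℝ => (x - Δ) * Real.log (x - Δ))
          (nhdsWithin Δ (Set.Ioi Δ)) (nhds 0) := by
        refine hylogy.congr fun x => by ring
      have h2 : Tendsto (fun x : ℝ => (x - Δ) * Real.log x)
          (nhdsWithin Δ (Set.Ioi Δ)) (nhds 0) := by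
        have hlog : Tendsto (fun x : ℝ => Real.log x) (nhdsWithin Δ (Set.Ioi Δ)) (nhds (Real.log Δ)) :=
          ((Real.continuousAt_log hΔ.ne').tendsto.comp hxtend)
        have hsub : Tendsto (fun x : ℝ => x - Δ) (nhdsWithin Δ (Set.Ioi Δ)) (nhds 0) := by
          simpa using hxtend.sub (tendsto_const_nhds : Tendsto (fun _ : ℝ => Δ) _ (nhds Δ))
        simpa using hsub.mul hlog
      have h3x : Tendsto (fun x : ℝ => 3 * x) (nhdsWithin Δ (Set.Ioi Δ)) (nhds (3 * Δ)) :=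
        tendsto_const_nhds.mul hxtend
      have := (h3x.mul (h1.sub h2)).add (tendsto_const_nhds : Tendsto (fun _ : ℝ => c * Δ) _ _)
      simpa using this
    have hφ : Tendsto (fun x : ℝ => 3 * x * (x - Δ)) (nhdsWithin Δ (Set.Ioi Δ)) (nhdsWithin 0 (Set.Ioi 0)) := by
      apply tendsto_nhdsWithin_of_tendsto_nhds_of_eventually_within
      · have : Tendsto (fun x : ℝ => 3 * x * (x - Δ)) (nhds Δ) (nhds (3 * Δ * (Δ - Δ))) := by
          exact ((continuous_const.mul continuous_id).mul (continuous_id.sub continuous_const)).tendsto Δ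
        simpa using this.mono_left nhdsWithin_le_nhds
      · filter_upwards [self_mem_nhdsWithin] with x hx
        have hx' : Δ < x := hx
        have : 0 < 3 * x * (x - Δ) := by
          have h0 : (0:ℝ) < x := hΔ.trans hx'
          have h1 : 0 < x - Δ := sub_pos.2 hx'
          positivity
        exact this
    have hinv : Tendsto (fun x : ℝ => (3 * x * (x - Δ))⁻¹) (nhdsWithin Δ (Set.Ioi Δ)) atTop :=
      tendsto_inv_nhdsGT_zero.comp hφ
    have hmul : Tendsto (fun x : ℝ =>
        (3 * x * ((x - Δ) * Real.log (x - Δ) - (x - Δ) * Real.log x) + c * Δ) * (3 * x * (x - Δ))⁻¹)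
        (nhdsWithin Δ (Set.Ioi Δ)) atTop :=
      hnum.pos_mul_atTop (by positivity) hinv
    refine hmul.congr' ?_
    filter_upwards [self_mem_nhdsWithin] with x hx
    have hx' : Δ < x := hx
    have h0 : (0:ℝ) < x := hΔ.trans hx'
    have h1 : 0 < x - Δ := sub_pos.2 hx'
    have hne : 3 * x * (x - Δ) ≠ 0 := by positivity
    show (3 * x * ((x - Δ) * Real.log (x - Δ) - (x - Δ) * Real.log x) + c * Δ) * (3 * x * (x - Δ))⁻¹
        = Real.log ((x - Δ) / x) + c * Δ / (3 * x * (x - Δ))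
    rw [Real.log_div h1.ne' h0.ne']
    have hre : 3 * x * ((x - Δ) * Real.log (x - Δ) - (x - Δ) * Real.log x) + c * Δ
        = (Real.log (x - Δ) - Real.log x) * (3 * x * (x - Δ)) + c * Δ := by ring
    rw [hre, add_mul, mul_inv_cancel_right₀ hne, div_eq_mul_inv]
  · -- tendsto 0 at atTop
    have h1 : Tendsto (fun x : ℝ => Real.log ((x - Δ) / x)) atTop (nhds 0) := by
      have hq : Tendsto (fun x : ℝ => (x - Δ) / x) atTop (nhds 1) := by
        have : Tendsto (fun x : ℝ => 1 - Δ / x) atTop (nhds (1 - 0)) :=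
          tendsto_const_nhds.sub (tendsto_const_nhds.div_atTop tendsto_id)
        rw [sub_zero] at this
        refine this.congr' ?_
        filter_upwards [eventually_gt_atTop (0:ℝ)] with x hx
        field_simp
      have h3 := (Real.continuousAt_log one_ne_zero).tendsto.comp hq
      rw [Real.log_one] at h3
      exact h3
    have h2 : Tendsto (fun x : ℝ => c * Δ / (3 * x * (x - Δ))) atTop (nhds 0) := by
      apply Tendsto.div_atTop (tendsto_const_nhds : Tendsto (fun _ : ℝ => c * Δ) _ _)
      have ha : Tendsto (fun x : ℝ => 3 * x) atTop atTop :=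
        tendsto_id.const_mul_atTop (by norm_num)
      have hb : Tendsto (fun x : ℝ => x - Δ) atTop atTop := by
        simpa [sub_eq_add_neg] using
          tendsto_atTop_add_const_right atTop (-Δ) (tendsto_id : Tendsto (fun x : ℝ => x) atTop atTop)
      exact ha.atTop_mul_atTop₀ hb
    have h3 := h1.add h2
    rw [add_zero] at h3
    exact h3
end
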